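/- Suppose 1 ≤ m < ∞, 0 ≤ s < r < ∞, 0 ≤ β < ∞, I = {t : s < t ≤ r}, and f : I → ℝ is a nonnegative function satisfying, for every t ∈ I, limsup_{u → t⁻} f(u) ≤ f(t) ≤ f(r) + β ∫_t^r f(u)^{1−1/m} du (with the convention 0⁰ = 1). Then f(t)^{1/m} ≤ f(r)^{1/m} + (β/m)(r−t) for every t ∈ I. -/

import Mathlib

open Filter Set MeasureTheory
open scoped Topology

lemma auxInt (m a b T r : ℝ) (hm : 1 ≤ m) (ha : 0 < a) (hb : 0 < b) (hTr : T ≤ r) :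
    ∫ u in Set.Ioo T r, (a + b * (r - u)) ^ (m - 1)
      = ((a + b * (r - T)) ^ m - a ^ m) / (m * b) := by
  have hm0 : (0:ℝ) < m := lt_of_lt_of_le one_pos hm
  have hψpos : ∀ u ∈ Set.Icc T r, 0 < a + b * (r - u) := by
    intro u hu
    have : 0 ≤ b * (r - u) := mul_nonneg hb.le (by linarith [hu.2])
    linarith
  have hderiv : ∀ u ∈ Set.uIcc T r,
      HasDerivAt (fun u => -((a + b * (r - u)) ^ m) / (m * b))
        ((a + b * (r - u)) ^ (m - 1)) u := by
    intro u hu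
    rw [Set.uIcc_of_le hTr] at hu
    have hψu : 0 < a + b * (r - u) := hψpos u hu
    have h1 : HasDerivAt (fun u : ℝ => a + b * (r - u)) (-b) u := by
      have : HasDerivAt (fun u : ℝ => a + b * (r - u)) (0 + b * (0 - 1)) u :=
        (hasDerivAt_const u a).add (((hasDerivAt_const u r).sub (hasDerivAt_id u)).const_mul b)
      simpa using this
    have h2 : HasDerivAt (fun u : ℝ => (a + b * (r - u)) ^ m)
        (-b * m * (a + b * (r - u)) ^ (m - 1)) u :=
      h1.rpow_const (Or.inl hψu.ne')
    have h3 := (h2.neg).div_const (m * b)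
    convert h3 using 1
    · rfl
    · rfl
    · rfl
    field_simp
  have hcont : ContinuousOn (fun u : ℝ => (a + b * (r - u)) ^ (m - 1)) (Set.uIcc T r) := by
    apply ContinuousOn.rpow_const
    · fun_prop
    · intro u hu
      rw [Set.uIcc_of_le hTr] at hu
      exact Or.inl (hψpos u hu).ne'
  have hint : IntervalIntegrable (fun u : ℝ => (a + b * (r - u)) ^ (m - 1))
      volume T r := hcont.intervalIntegrable
  have := intervalIntegral.integral_eq_sub_of_hasDerivAt hderiv hint
  rw [intervalIntegral.integral_of_le hTr, MeasureTheory.integral_Ioc_eq_integral_Ioo] at this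
  rw [this]
  have : r - r = 0 := by ring
  rw [this]
  field_simp
  ring

/-- ODE comparison lemma `lemma:ode_comparison`. -/
theorem stmt2 (m s r β : ℝ) (f : ℝ → ℝ)
    (hm : 1 ≤ m) (hs : 0 ≤ s) (hsr : s < r) (hβ : 0 ≤ β)
    (hnonneg : ∀ t ∈ Set.Ioc s r, 0 ≤ f t)
    (hlsc : ∀ t ∈ Set.Ioc s r, limsup f (𝓝[Set.Ioo s t] t) ≤ f t)
    (hineq : ∀ t ∈ Set.Ioc s r,
      f t ≤ f r + β * ∫ u in Set.Ioo t r, f u ^ (1 - 1 / m)) :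
    ∀ t ∈ Set.Ioc s r, f t ^ (1 / m) ≤ f r ^ (1 / m) + (β / m) * (r - t) := by
  intro t₀ ht₀
  have hm0 : (0:ℝ) < m := lt_of_lt_of_le one_pos hm
  set c : ℝ := 1 - 1 / m with hc_def
  have hc : 0 ≤ c := by
    have : 1 / m ≤ 1 := by rw [div_le_one hm0]; exact hm
    simp only [hc_def]; linarith
  have hfr : 0 ≤ f r := hnonneg r ⟨hsr, le_refl r⟩
  have hrt₀ : 0 ≤ r - t₀ := by linarith [ht₀.2]
  by_cases hInt : IntegrableOn (fun u => f u ^ c) (Set.Ioo t₀ r) volume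
  swap
  · -- the integral is zero; f t₀ ≤ f r
    have h0 : (∫ u in Set.Ioo t₀ r, f u ^ c) = 0 := integral_undef hInt
    have := hineq t₀ ht₀
    rw [h0] at this
    have hle : f t₀ ≤ f r := by linarith
    have h1 : f t₀ ^ (1/m) ≤ f r ^ (1/m) :=
      Real.rpow_le_rpow (hnonneg t₀ ht₀) hle (by positivity)
    have : 0 ≤ (β / m) * (r - t₀) := by positivity
    linarith
  -- main case
  -- bound for f on (t₀, r]
  set M : ℝ := f r + β * ∫ u in Set.Ioo t₀ r, f u ^ c with hM_def
  have hfM : ∀ u ∈ Set.Ioc t₀ r, f u ≤ M := by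
    intro u hu
    have hu' : u ∈ Set.Ioc s r := ⟨lt_trans ht₀.1 hu.1, hu.2⟩
    have h1 := hineq u hu'
    have h2 : (∫ v in Set.Ioo u r, f v ^ c) ≤ ∫ v in Set.Ioo t₀ r, f v ^ c := by
      apply setIntegral_mono_set hInt
      · rw [EventuallyLE, ae_restrict_iff' measurableSet_Ioo]
        filter_upwards with v hv
        exact Real.rpow_nonneg (hnonneg v ⟨lt_trans ht₀.1 hv.1, hv.2.le⟩) c
      · exact (Set.Ioo_subset_Ioo_left hu.1.le).eventuallyLE
    have := mul_le_mul_of_nonneg_left h2 hβ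
    simp only [hM_def]; linarith
  have key : ∀ ε > 0, f t₀ ^ (1/m) ≤ f r ^ (1/m) + ε + (β/m + ε) * (r - t₀) := by
    intro ε hε
    set a : ℝ := f r ^ (1/m) + ε with ha_def
    set b : ℝ := β/m + ε with hb_def
    have ha : 0 < a := by
      have := Real.rpow_nonneg hfr (1/m)
      simp only [ha_def]; linarith
    have hb : 0 < b := by
      have : 0 ≤ β / m := by positivity
      simp only [hb_def]; linarith
    set ψ : ℝ → ℝ := fun u => a + b * (r - u) with hψ_def
    set g : ℝ → ℝ := fun u => ψ u ^ m with hg_def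
    have hψa : ∀ u, u ≤ r → a ≤ ψ u := by
      intro u hu
      have : 0 ≤ b * (r - u) := mul_nonneg hb.le (by linarith)
      simp only [hψ_def]; linarith
    have hψpos : ∀ u, u ≤ r → 0 < ψ u := fun u hu => lt_of_lt_of_le ha (hψa u hu)
    have hfr_lt : f r < a ^ m := by
      have h1 : (f r ^ (1/m)) ^ m < a ^ m := by
        apply Real.rpow_lt_rpow (Real.rpow_nonneg hfr _) _ hm0
        simp only [ha_def]; linarith
      rwa [one_div, Real.rpow_inv_rpow hfr hm0.ne'] at h1
    have hmc : m * c = m - 1 := by simp only [hc_def]; field_simp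
    have hgc : ∀ u, u ≤ r → g u ^ c = ψ u ^ (m - 1) := by
      intro u hu
      simp only [hg_def]
      rw [← Real.rpow_mul (hψpos u hu).le, hmc]
    have hgpos : ∀ u, u ≤ r → 0 < g u := by
      intro u hu
      exact Real.rpow_pos_of_pos (hψpos u hu) m
    -- the bad set
    set A : Set ℝ := {u | u ∈ Set.Icc t₀ r ∧ g u ≤ f u} with hA_def
    have hempty : ∀ u ∈ Set.Icc t₀ r, f u < g u := by
      by_contra hcon
      push_neg at hcon
      obtain ⟨u₀, hu₀, hu₀'⟩ := hcon
      have hAne : A.Nonempty := ⟨u₀, hu₀, hu₀'⟩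
      have hAbdd : BddAbove A := (bddAbove_Icc).mono (fun x hx => hx.1)
      set T : ℝ := sSup A with hT_def
      have hTmem : T ∈ Set.Icc t₀ r := by
        constructor
        · exact le_trans hu₀.1 (le_csSup hAbdd ⟨hu₀, hu₀'⟩)
        · exact csSup_le hAne (fun x hx => hx.1.2)
      have hTs : s < T := lt_of_lt_of_le ht₀.1 hTmem.1
      have hTIoc : T ∈ Set.Ioc s r := ⟨hTs, hTmem.2⟩
      -- step 1 : g T ≤ f T
      have hgT : g T ≤ f T := by
        by_cases hTA : T ∈ A
        · exact hTA.2
        · -- T is a limit from the left of points of A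
          have ht₀T : t₀ < T := by
            rcases lt_or_eq_of_le hTmem.1 with h | h
            · exact h
            · exfalso
              obtain ⟨x, hx⟩ := hAne
              have hx1 : x ≤ T := le_csSup hAbdd hx
              have hx2 : t₀ ≤ x := hx.1.1
              have : x = T := le_antisymm hx1 (h ▸ hx2)
              exact hTA (this ▸ hx)
          have hfreq : ∃ᶠ u in 𝓝[Set.Ioo s T] T, g u ≤ f u := by
            rw [Filter.Frequently]
            intro hev
            rw [eventually_nhdsWithin_iff, Metric.eventually_nhds_iff] at hev
            obtain ⟨δ, hδ, hδ'⟩ := hev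
            have hub : ∀ x ∈ A, x ≤ T - min δ (T - t₀) / 2 := by
              intro x hx
              by_contra hxc
              push_neg at hxc
              have hmin : 0 < min δ (T - t₀) := lt_min hδ (by linarith)
              have hxT : x < T := lt_of_le_of_ne (le_csSup hAbdd hx)
                (fun h => hTA (h ▸ hx))
              have hxs : s < x := lt_of_lt_of_le ht₀.1 hx.1.1
              have hxd : dist x T < δ := by
                rw [Real.dist_eq, abs_of_nonpos (by linarith)]
                have : min δ (T - t₀) ≤ δ := min_le_left _ _
                linarith
              exact hδ' hxd ⟨hxs, hxT⟩ hx.2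
            have := csSup_le hAne hub
            have hmin : 0 < min δ (T - t₀) := lt_min hδ (by linarith)
            simp only [← hT_def] at this
            linarith
          have hNeBot : (𝓝[Set.Ioo s T] T).NeBot := by
            apply mem_closure_iff_nhdsWithin_neBot.mp
            rw [closure_Ioo (ne_of_lt hTs)]
            exact ⟨hTs.le, le_refl T⟩
          have hbdd : IsBoundedUnder (· ≤ ·) (𝓝[Set.Ioo s T] T) f := by
            refine ⟨M, ?_⟩
            rw [Filter.eventually_map]
            have hev1 : ∀ᶠ u in 𝓝[Set.Ioo s T] T, u ∈ Set.Ioo s T :=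
              self_mem_nhdsWithin
            have hev2 : ∀ᶠ u in 𝓝[Set.Ioo s T] T, t₀ < u :=
              eventually_nhdsWithin_of_eventually_nhds
                (eventually_gt_nhds ht₀T)
            filter_upwards [hev1, hev2] with u hu1 hu2
            exact hfM u ⟨hu2, le_trans hu1.2.le hTmem.2⟩
          have hgcont : Tendsto g (𝓝[Set.Ioo s T] T) (𝓝 (g T)) := by
            apply Tendsto.mono_left _ nhdsWithin_le_nhds
            have : ContinuousAt g T := by
              apply ContinuousAt.rpow_const
              · fun_prop
              · exact Or.inl (hψpos T hTmem.2).ne'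
            exact this.tendsto
          have hlimsup : g T ≤ limsup f (𝓝[Set.Ioo s T] T) := by
            apply le_of_forall_pos_le_add
            intro δ hδ
            have hev : ∀ᶠ u in 𝓝[Set.Ioo s T] T, g T - δ ≤ g u := by
              have := hgcont (Ioi_mem_nhds (show g T - δ < g T by linarith))
              filter_upwards [this] with u hu using le_of_lt hu
            have hfreq' : ∃ᶠ u in 𝓝[Set.Ioo s T] T, g T - δ ≤ f u := by
              apply (hfreq.and_eventually hev).mono
              rintro u ⟨h1, h2⟩
              linarith
            have := le_limsup_of_frequently_le hfreq' hbdd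
            linarith
          exact le_trans hlimsup (hlsc T hTIoc)
      -- step 2 : T < r
      have hTr : T < r := by
        rcases lt_or_eq_of_le hTmem.2 with h | h
        · exact h
        · exfalso
          have : g r ≤ f r := h ▸ hgT
          have hgr : g r = a ^ m := by
            simp only [hg_def, hψ_def, sub_self, mul_zero, add_zero]
          rw [hgr] at this
          linarith
      -- step 3 : contradiction via the integral inequality
      have h1 := hineq T hTIoc
      have h2 : (∫ u in Set.Ioo T r, f u ^ c) ≤ ∫ u in Set.Ioo T r, ψ u ^ (m-1) := by
        apply setIntegral_mono_on
        · exact hInt.mono_set (Set.Ioo_subset_Ioo_left hTmem.1)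
        · have hco : ContinuousOn (fun u : ℝ => ψ u ^ (m-1)) (Set.Icc T r) := by
            apply ContinuousOn.rpow_const
            · fun_prop
            · intro u hu
              exact Or.inl (hψpos u hu.2).ne'
          exact (hco.integrableOn_Icc).mono_set Set.Ioo_subset_Icc_self
        · exact measurableSet_Ioo
        · intro u hu
          have hur : u ≤ r := hu.2.le
          have huA : u ∉ A := by
            intro huA
            have : u ≤ T := le_csSup hAbdd huA
            linarith [hu.1]
          have hfu : 0 ≤ f u := hnonneg u ⟨lt_trans ht₀.1 (lt_of_le_of_lt hTmem.1 hu.1), hur⟩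
          have hfg : f u ≤ g u := by
            by_contra hcc
            push_neg at hcc
            exact huA ⟨⟨le_trans hTmem.1 hu.1.le, hur⟩, hcc.le⟩
          calc f u ^ c ≤ g u ^ c := Real.rpow_le_rpow hfu hfg hc
            _ = ψ u ^ (m-1) := hgc u hur
      have h3 : (∫ u in Set.Ioo T r, ψ u ^ (m-1)) = (ψ T ^ m - a ^ m) / (m * b) := by
        have := auxInt m a b T r hm ha hb hTr.le
        simpa [hψ_def] using this
      -- arithmetic
      have hψT : a ≤ ψ T := hψa T hTmem.2
      have hgTa : a ^ m ≤ ψ T ^ m := Real.rpow_le_rpow ha.le hψT hm0.le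
      have hmb : 0 < m * b := by positivity
      have hβmb : β ≤ m * b := by
        have : m * (β / m) = β := by field_simp
        simp only [hb_def]
        nlinarith
      have hD : 0 ≤ ψ T ^ m - a ^ m := by linarith
      have hdiv : β * ((ψ T ^ m - a ^ m) / (m * b)) ≤ ψ T ^ m - a ^ m := by
        rw [mul_div_assoc'] at *
        rw [div_le_iff₀ hmb]
        nlinarith
      have hfinal : f T < g T := by
        have : f T ≤ f r + β * ((ψ T ^ m - a ^ m) / (m * b)) := by
          rw [← h3]
          calc f T ≤ f r + β * ∫ u in Set.Ioo T r, f u ^ c := h1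
            _ ≤ f r + β * ∫ u in Set.Ioo T r, ψ u ^ (m-1) :=
              by linarith [mul_le_mul_of_nonneg_left h2 hβ]
        have hgTval : g T = ψ T ^ m := rfl
        rw [hgTval]
        linarith
      linarith
    -- conclude from emptiness of A
    have hft₀ : f t₀ < g t₀ := hempty t₀ ⟨le_refl t₀, ht₀.2⟩
    have h1 : f t₀ ^ (1/m) ≤ g t₀ ^ (1/m) :=
      Real.rpow_le_rpow (hnonneg t₀ ht₀) hft₀.le (by positivity)
    have h2 : g t₀ ^ (1/m) = ψ t₀ := by
      simp only [hg_def]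
      rw [one_div, Real.rpow_rpow_inv (hψpos t₀ ht₀.2).le hm0.ne']
    rw [h2] at h1
    simp only [hψ_def, ha_def, hb_def] at h1
    linarith
  -- let ε → 0
  apply le_of_forall_pos_le_add
  intro δ hδ
  have hpos : 0 < 1 + (r - t₀) := by linarith
  have hε : 0 < δ / (1 + (r - t₀)) := by positivity
  have := key _ hε
  have heq : δ / (1 + (r - t₀)) + (β/m + δ / (1 + (r - t₀))) * (r - t₀)
      = (β/m) * (r - t₀) + δ := by
    field_simp
    ring
  linarith
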